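/- arXiv:1705.00400 — 2 statements merged into one kernel-verified Lean document; each statement's English description precedes it below -/
import Mathlib

section
/- For matrices F_i (i = 1,…,I) indexed over a countable state set, each with nonnegative off-diagonal entries, and a subset J of indices, the principal submatrix satisfies [exp(F_i τ)]_J ≥ exp([F_i]_J τ) ≥ 0 entrywise for all τ ≥ 0, where [M]_J denotes the submatrix with rows and columns in J. -/
open Matrix NormedSpace

attribute [local instance] Matrix.linftyOpNormedAddCommGroup Matrix.linftyOpNormedRing
  Matrix.linftyOpNormedAlgebra

namespace Stmt11Aux

variable {n : Type*} [Fintype n] [DecidableEq n]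

lemma exp_entry (M : Matrix n n ℝ) (a b : n) :
    NormedSpace.exp M a b = ∑' k : ℕ, ((k.factorial : ℝ))⁻¹ * (M ^ k) a b := by
  have hs : Summable fun k : ℕ => ((k.factorial : ℝ))⁻¹ • M ^ k := expSeries_summable' M
  have h1 : Summable fun k : ℕ => (((k.factorial : ℝ))⁻¹ • M ^ k) a :=
    Pi.summable.mp hs a
  rw [exp_eq_tsum ℝ]
  show (∑' k : ℕ, ((k.factorial : ℝ))⁻¹ • M ^ k) a b = _
  erw [tsum_apply hs, tsum_apply h1]
  rfl

lemma entry_summable (M : Matrix n n ℝ) (a b : n) :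
    Summable fun k : ℕ => ((k.factorial : ℝ))⁻¹ * (M ^ k) a b := by
  have hs : Summable fun k : ℕ => ((k.factorial : ℝ))⁻¹ • M ^ k := expSeries_summable' M
  have h1 : Summable fun k : ℕ => (((k.factorial : ℝ))⁻¹ • M ^ k) a :=
    Pi.summable.mp hs a
  exact Pi.summable.mp h1 b

lemma pow_entry_nonneg (B : Matrix n n ℝ) (hB : ∀ i j, 0 ≤ B i j) (k : ℕ) :
    ∀ i j, 0 ≤ (B ^ k) i j := by
  induction k with
  | zero => intro i j; rw [pow_zero]; by_cases h : i = j <;> simp [one_apply, h]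
  | succ k ih =>
    intro i j
    rw [pow_succ, mul_apply]
    exact Finset.sum_nonneg fun c _ => mul_nonneg (ih i c) (hB c j)

lemma exp_shift (M : Matrix n n ℝ) (c : ℝ) :
    NormedSpace.exp M = Real.exp (-c) • NormedSpace.exp (M + c • (1 : Matrix n n ℝ)) := by
  have hcomm : Commute (M + c • (1 : Matrix n n ℝ)) ((-c) • (1 : Matrix n n ℝ)) :=
    (Commute.one_right _).smul_right _
  have h1 : NormedSpace.exp ((-c) • (1 : Matrix n n ℝ)) = Real.exp (-c) • (1 : Matrix n n ℝ) := by
    rw [← Algebra.algebraMap_eq_smul_one]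
    erw [← algebraMap_exp_comm (-c)]
    rw [← Real.exp_eq_exp_ℝ,
      Algebra.algebraMap_eq_smul_one]
  have h2 : M = M + c • (1 : Matrix n n ℝ) + (-c) • (1 : Matrix n n ℝ) := by
    rw [add_assoc, ← add_smul, add_neg_cancel, zero_smul, add_zero]
  conv_lhs => rw [h2]
  rw [Matrix.exp_add_of_commute _ _ hcomm, h1, mul_smul_comm, mul_one]

lemma sub_pow_le {N : ℕ} (B : Matrix (Fin N) (Fin N) ℝ) (hB : ∀ i j, 0 ≤ B i j)
    (J : Finset (Fin N)) (k : ℕ) (a b : {j // j ∈ J}) :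
    ((B.submatrix (Subtype.val : {j // j ∈ J} → Fin N) Subtype.val) ^ k) a b ≤
      (B ^ k) a.val b.val := by
  induction k generalizing a b with
  | zero =>
    rw [pow_zero, pow_zero, one_apply, one_apply]
    by_cases h : a = b
    · simp [h]
    · rw [if_neg h, if_neg (fun hv => h (Subtype.ext hv))]
  | succ k ih =>
    rw [pow_succ, pow_succ, mul_apply, mul_apply]
    calc ∑ c : {j // j ∈ J},
          ((B.submatrix (Subtype.val : {j // j ∈ J} → Fin N) Subtype.val) ^ k) a c *
            B.submatrix Subtype.val Subtype.val c b
        ≤ ∑ c : {j // j ∈ J}, (B ^ k) a.val c.val * B c.val b.val := by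
          refine Finset.sum_le_sum fun c _ => ?_
          exact mul_le_mul_of_nonneg_right (ih a c) (hB c.val b.val)
      _ = ∑ c ∈ J, (B ^ k) a.val c * B c b.val := by
          rw [← Finset.sum_coe_sort J (fun c => (B ^ k) a.val c * B c b.val)]
      _ ≤ ∑ c : Fin N, (B ^ k) a.val c * B c b.val := by
          refine Finset.sum_le_sum_of_subset_of_nonneg (J.subset_univ) fun c _ _ => ?_
          exact mul_nonneg (pow_entry_nonneg B hB k _ _) (hB _ _)

end Stmt11Aux

open Stmt11Aux

/-- for a Metzler matrix `F` (nonnegative off-diagonal entries) and an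
index set `J`, the principal submatrix satisfies
`[exp(F τ)]_J ≥ exp([F]_J τ) ≥ 0` entrywise for all `τ ≥ 0`. -/
theorem stmt11 {N : ℕ} (F : Matrix (Fin N) (Fin N) ℝ)
    (hMetzler : ∀ i j, i ≠ j → 0 ≤ F i j) (J : Finset (Fin N)) (τ : ℝ) (hτ : 0 ≤ τ) :
    ∀ a b : {j // j ∈ J},
      0 ≤ NormedSpace.exp (τ • F.submatrix (Subtype.val : {j // j ∈ J} → Fin N) Subtype.val) a b ∧
      NormedSpace.exp (τ • F.submatrix (Subtype.val : {j // j ∈ J} → Fin N) Subtype.val) a b ≤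
        NormedSpace.exp (τ • F) a.val b.val := by
  set G : Matrix (Fin N) (Fin N) ℝ := τ • F with hG
  have hGoff : ∀ i j, i ≠ j → 0 ≤ G i j := fun i j h =>
    mul_nonneg hτ (hMetzler i j h)
  set c : ℝ := ∑ i : Fin N, |G i i| with hc
  have hci : ∀ i, |G i i| ≤ c := fun i =>
    Finset.single_le_sum (f := fun j => |G j j|) (fun j _ => abs_nonneg _) (Finset.mem_univ i)
  set B : Matrix (Fin N) (Fin N) ℝ := G + c • (1 : Matrix (Fin N) (Fin N) ℝ) with hBdef
  have hB : ∀ i j, 0 ≤ B i j := by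
    intro i j
    by_cases h : i = j
    · subst h
      have hBi : B i i = G i i + c := by
        simp [hBdef, Matrix.add_apply, Matrix.smul_apply, Matrix.one_apply_eq]
      rw [hBi]
      have h1 := hci i
      have h2 := neg_abs_le (G i i)
      linarith
    · have hBi : B i j = G i j := by
        simp [hBdef, Matrix.add_apply, Matrix.smul_apply, Matrix.one_apply_ne h]
      rw [hBi]
      exact hGoff i j h
  have hBJ : ∀ x y : {j // j ∈ J},
      0 ≤ B.submatrix (Subtype.val : {j // j ∈ J} → Fin N) Subtype.val x y :=
    fun x y => hB _ _
  have hsub : τ • F.submatrix (Subtype.val : {j // j ∈ J} → Fin N) (Subtype.val : {j // j ∈ J} → Fin N) =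
      G.submatrix (Subtype.val : {j // j ∈ J} → Fin N) (Subtype.val : {j // j ∈ J} → Fin N) := by
    rw [hG, Matrix.submatrix_smul]
    rfl
  have hBsub : B.submatrix (Subtype.val : {j // j ∈ J} → Fin N) (Subtype.val : {j // j ∈ J} → Fin N) =
      G.submatrix (Subtype.val : {j // j ∈ J} → Fin N) (Subtype.val : {j // j ∈ J} → Fin N) +
        c • (1 : Matrix {j // j ∈ J} {j // j ∈ J} ℝ) := by
    ext x y
    by_cases h : x = y
    · subst h
      simp [hBdef, Matrix.one_apply_eq]
    · have hv : (x : Fin N) ≠ (y : Fin N) := fun hv => h (Subtype.ext hv)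
      simp [hBdef, Matrix.one_apply_ne h, Matrix.one_apply_ne hv]
  have e1 : NormedSpace.exp G = Real.exp (-c) • NormedSpace.exp B := by
    rw [exp_shift G c, ← hBdef]
  have e2 : NormedSpace.exp (G.submatrix (Subtype.val : {j // j ∈ J} → Fin N) (Subtype.val : {j // j ∈ J} → Fin N)) =
      Real.exp (-c) • NormedSpace.exp (B.submatrix (Subtype.val : {j // j ∈ J} → Fin N) (Subtype.val : {j // j ∈ J} → Fin N)) := by
    rw [exp_shift (G.submatrix (Subtype.val : {j // j ∈ J} → Fin N) (Subtype.val : {j // j ∈ J} → Fin N)) c, ← hBsub]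
  intro a b
  constructor
  · rw [hsub, e2]
    simp only [Matrix.smul_apply, smul_eq_mul]
    refine mul_nonneg (Real.exp_nonneg _) ?_
    rw [exp_entry]
    exact tsum_nonneg fun k =>
      mul_nonneg (inv_nonneg.mpr (Nat.cast_nonneg _)) (pow_entry_nonneg _ hBJ k a b)
  · rw [hsub, e1, e2]
    simp only [Matrix.smul_apply, smul_eq_mul]
    refine mul_le_mul_of_nonneg_left ?_ (Real.exp_nonneg _)
    rw [exp_entry, exp_entry]
    refine Summable.tsum_le_tsum (fun k => ?_) (entry_summable _ _ _) (entry_summable _ _ _)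
    exact mul_le_mul_of_nonneg_left (sub_pow_le B hB J k a b)
      (inv_nonneg.mpr (Nat.cast_nonneg _))
end

section
/- Let F_0,…,F_K be Metzler matrices in ℝ^{N×N}, J ⊆ {1,…,N}, P(0) ∈ ℝ^N nonnegative, and durations τ_0,…,τ_K ≥ 0. Define P(T) = (∏_{k=K}^{0} exp(F_k τ_k)) P(0) and the reduced solution P̄_J(T) = (∏_{k=K}^{0} exp([F_k]_J τ_k)) P_J(0). Then P_J(T) ≥ P̄_J(T) entrywise. -/
open Matrix NormedSpace

section Aux

variable {ι : Type*} [Fintype ι] [DecidableEq ι]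

attribute [local instance] Matrix.linftyOpNormedRing Matrix.linftyOpNormedAlgebra

/-- entry evaluation as a continuous linear map -/
noncomputable def entryCLM (i j : ι) : Matrix ι ι ℝ →L[ℝ] ℝ :=
  { Matrix.entryLinearMap ℝ ℝ i j with
    cont := by
      exact
        ((continuous_apply j).comp (continuous_apply i) : Continuous fun A : Matrix ι ι ℝ => A i j) }

omit [Fintype ι] [DecidableEq ι] in
@[simp] lemma entryCLM_apply (i j : ι) (A : Matrix ι ι ℝ) : entryCLM i j A = A i j := rfl

lemma summable_exp_entries (A : Matrix ι ι ℝ) (i j : ι) :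
    Summable fun n : ℕ => ((n.factorial : ℝ)⁻¹ • A ^ n) i j := by
  have h := expSeries_summable' (𝕂 := ℝ) A
  have := h.map (entryCLM i j : Matrix ι ι ℝ →L[ℝ] ℝ).toLinearMap.toAddMonoidHom
    (entryCLM i j).continuous
  simpa [Function.comp_def] using this

lemma exp_entry (A : Matrix ι ι ℝ) (i j : ι) :
    exp A i j = ∑' n : ℕ, ((n.factorial : ℝ)⁻¹ • A ^ n) i j := by
  have h := expSeries_summable' (𝕂 := ℝ) A
  have := ((entryCLM i j : Matrix ι ι ℝ →L[ℝ] ℝ).map_tsum h).symm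
  rw [exp_eq_tsum ℝ]
  simpa using this.symm

lemma pow_entries_nonneg {A : Matrix ι ι ℝ} (hA : ∀ i j, 0 ≤ A i j) (n : ℕ) :
    ∀ i j, 0 ≤ (A ^ n) i j := by
  induction n with
  | zero => intro i j; simp [Matrix.one_apply]; positivity
  | succ n ih =>
      intro i j
      rw [pow_succ, Matrix.mul_apply]
      exact Finset.sum_nonneg fun k _ => mul_nonneg (ih i k) (hA k j)

/-- exp of an entrywise-nonnegative matrix is entrywise nonnegative -/
lemma exp_entries_nonneg {A : Matrix ι ι ℝ} (hA : ∀ i j, 0 ≤ A i j) (i j : ι) :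
    0 ≤ exp A i j := by
  rw [exp_entry]
  refine tsum_nonneg fun n => ?_
  have := pow_entries_nonneg hA n i j
  simp only [Matrix.smul_apply, smul_eq_mul]
  positivity

lemma exp_shift (A : Matrix ι ι ℝ) (c : ℝ) :
    exp A = Real.exp (-c) • exp (A + c • 1) := by
  have hcomm : Commute A (c • (1 : Matrix ι ι ℝ)) := (Commute.one_right A).smul_right c
  have h1 : exp (c • (1 : Matrix ι ι ℝ)) = Real.exp c • 1 := by
    have := (algebraMap_exp_comm (𝕂 := ℝ) (𝔸 := Matrix ι ι ℝ) c).symm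
    have halg : ∀ x : ℝ, algebraMap ℝ (Matrix ι ι ℝ) x = x • 1 := fun x =>
      Algebra.algebraMap_eq_smul_one x
    rw [halg, halg] at this
    rw [Real.exp_eq_exp_ℝ]; exact this
  have h2 : exp (A + c • 1) = exp A * exp (c • (1 : Matrix ι ι ℝ)) :=
    Matrix.exp_add_of_commute A _ hcomm
  rw [h2, h1, Matrix.mul_smul, Matrix.mul_one, smul_smul, ← Real.exp_add]
  simp

/-- a nonnegative shift making a Metzler matrix entrywise nonnegative -/
lemma metzler_shift {A : Matrix ι ι ℝ} (hA : ∀ i j, i ≠ j → 0 ≤ A i j) :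
    ∃ c : ℝ, ∀ i j, 0 ≤ (A + c • 1) i j := by
  refine ⟨∑ i, |A i i|, fun i j => ?_⟩
  by_cases h : i = j
  · subst h
    simp only [Matrix.add_apply, Matrix.smul_apply, Matrix.one_apply_eq, smul_eq_mul, mul_one]
    have h1 : |A i i| ≤ ∑ k, |A k k| :=
      Finset.single_le_sum (fun k _ => abs_nonneg (A k k)) (Finset.mem_univ i)
    have := neg_abs_le (A i i)
    linarith
  · simp only [Matrix.add_apply, Matrix.smul_apply, Matrix.one_apply_ne h, smul_eq_mul, mul_zero,
      add_zero]
    exact hA i j h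

end Aux

section Sub

variable {N : ℕ} {J : Finset (Fin N)}

lemma submatrix_pow_le {A : Matrix (Fin N) (Fin N) ℝ} (hA : ∀ i j, 0 ≤ A i j) (n : ℕ)
    (i j : {x // x ∈ J}) :
    ((A.submatrix Subtype.val Subtype.val : Matrix {x // x ∈ J} {x // x ∈ J} ℝ) ^ n) i j ≤
      (A ^ n) i.val j.val := by
  induction n generalizing i j with
  | zero =>
      simp only [pow_zero, Matrix.one_apply]
      by_cases h : i = j
      · simp [h]
      · have : i.val ≠ j.val := fun hv => h (Subtype.ext hv)
        simp [h, this]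
  | succ n ih =>
      have hB : ∀ a b : {x // x ∈ J},
          0 ≤ (A.submatrix Subtype.val Subtype.val : Matrix {x // x ∈ J} {x // x ∈ J} ℝ) a b :=
        fun a b => hA a.val b.val
      rw [pow_succ, pow_succ, Matrix.mul_apply, Matrix.mul_apply]
      calc ∑ k : {x // x ∈ J},
            ((A.submatrix Subtype.val Subtype.val : Matrix {x // x ∈ J} {x // x ∈ J} ℝ) ^ n) i k *
              A.submatrix Subtype.val Subtype.val k j
          ≤ ∑ k : {x // x ∈ J}, (A ^ n) i.val k.val * A k.val j.val := by
            refine Finset.sum_le_sum fun k _ => ?_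
            exact mul_le_mul (ih i k) le_rfl (hB k j) (pow_entries_nonneg hA n i.val k.val)
        _ = ∑ k ∈ J, (A ^ n) i.val k * A k j.val :=
            Finset.sum_coe_sort J (fun k => (A ^ n) i.val k * A k j.val)
        _ ≤ ∑ k : Fin N, (A ^ n) i.val k * A k j.val := by
            refine Finset.sum_le_sum_of_subset_of_nonneg (Finset.subset_univ J) fun k _ _ => ?_
            exact mul_nonneg (pow_entries_nonneg hA n i.val k) (hA k j.val)

lemma exp_submatrix_nonneg_le {A : Matrix (Fin N) (Fin N) ℝ} (hA : ∀ i j, 0 ≤ A i j)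
    (i j : {x // x ∈ J}) :
    exp (A.submatrix Subtype.val Subtype.val : Matrix {x // x ∈ J} {x // x ∈ J} ℝ) i j ≤
      exp A i.val j.val := by
  rw [exp_entry, exp_entry]
  refine (summable_exp_entries _ i j).tsum_le_tsum (fun n => ?_)
    (summable_exp_entries _ i.val j.val)
  simp only [Matrix.smul_apply, smul_eq_mul]
  have h1 : (0:ℝ) ≤ ((n.factorial : ℝ))⁻¹ := by positivity
  exact mul_le_mul_of_nonneg_left (submatrix_pow_le hA n i j) h1

/-- main entrywise comparison for exp of a Metzler matrix and its principal submatrix -/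
lemma exp_submatrix_le {A : Matrix (Fin N) (Fin N) ℝ} (hA : ∀ i j, i ≠ j → 0 ≤ A i j)
    (i j : {x // x ∈ J}) :
    exp (A.submatrix Subtype.val Subtype.val : Matrix {x // x ∈ J} {x // x ∈ J} ℝ) i j ≤
      exp A i.val j.val := by
  obtain ⟨c, hc⟩ := metzler_shift hA
  have hinj : Function.Injective (Subtype.val : {x // x ∈ J} → Fin N) := Subtype.val_injective
  have hsub : ((A + c • 1).submatrix Subtype.val Subtype.val :
      Matrix {x // x ∈ J} {x // x ∈ J} ℝ) =
      (A.submatrix Subtype.val Subtype.val : Matrix {x // x ∈ J} {x // x ∈ J} ℝ) + c • 1 := by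
    ext a b
    by_cases h : a = b
    · subst h
      simp [Matrix.submatrix_apply, Matrix.one_apply]
    · have hv : a.val ≠ b.val := fun hh => h (Subtype.ext hh)
      simp [Matrix.submatrix_apply, Matrix.one_apply, h, hv]
  have hfull : exp A = Real.exp (-c) • exp (A + c • 1) := exp_shift A c
  have hred : exp (A.submatrix Subtype.val Subtype.val :
      Matrix {x // x ∈ J} {x // x ∈ J} ℝ) =
      Real.exp (-c) • exp ((A + c • 1).submatrix Subtype.val Subtype.val :
        Matrix {x // x ∈ J} {x // x ∈ J} ℝ) := by
    rw [hsub]; exact exp_shift _ c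
  rw [hfull, hred]
  simp only [Matrix.smul_apply, smul_eq_mul]
  exact mul_le_mul_of_nonneg_left (exp_submatrix_nonneg_le hc i j) (Real.exp_nonneg _)

lemma exp_metzler_nonneg {ι : Type*} [Fintype ι] [DecidableEq ι] {A : Matrix ι ι ℝ}
    (hA : ∀ i j, i ≠ j → 0 ≤ A i j) (i j : ι) : 0 ≤ exp A i j := by
  obtain ⟨c, hc⟩ := metzler_shift hA
  rw [exp_shift A c]
  simp only [Matrix.smul_apply, smul_eq_mul]
  exact mul_nonneg (Real.exp_nonneg _) (exp_entries_nonneg hc i j)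

/-- key induction on a list of paired (full, reduced) nonnegative matrices -/
lemma key_list (L : List (Matrix (Fin N) (Fin N) ℝ × Matrix {x // x ∈ J} {x // x ∈ J} ℝ))
    (hL : ∀ p ∈ L, (∀ i j, 0 ≤ p.1 i j) ∧ (∀ i j, 0 ≤ p.2 i j) ∧
      (∀ i j : {x // x ∈ J}, p.2 i j ≤ p.1 i.val j.val))
    (v : Fin N → ℝ) (w : {x // x ∈ J} → ℝ) (hv : ∀ i, 0 ≤ v i) (hw : ∀ j, 0 ≤ w j)
    (hvw : ∀ j : {x // x ∈ J}, w j ≤ v j.val) :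
    (∀ i, 0 ≤ ((L.map Prod.fst).reverse.prod.mulVec v) i) ∧
    (∀ j, 0 ≤ ((L.map Prod.snd).reverse.prod.mulVec w) j) ∧
    (∀ j : {x // x ∈ J}, ((L.map Prod.snd).reverse.prod.mulVec w) j ≤
      ((L.map Prod.fst).reverse.prod.mulVec v) j.val) := by
  induction L generalizing v w with
  | nil =>
      simp only [List.map_nil, List.reverse_nil, List.prod_nil, Matrix.one_mulVec]
      exact ⟨hv, hw, hvw⟩
  | cons p L ih =>
      have hp := hL p List.mem_cons_self
      have hL' : ∀ q ∈ L, (∀ i j, 0 ≤ q.1 i j) ∧ (∀ i j, 0 ≤ q.2 i j) ∧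
          (∀ i j : {x // x ∈ J}, q.2 i j ≤ q.1 i.val j.val) :=
        fun q hq => hL q (List.mem_cons_of_mem p hq)
      have hstep : ∀ M : Matrix (Fin N) (Fin N) ℝ,
          ((p.1 :: L.map Prod.fst).reverse.prod) = (L.map Prod.fst).reverse.prod * p.1 := by
        intro M
        rw [List.reverse_cons, List.prod_append, List.prod_singleton]
      have e1 : ((p :: L).map Prod.fst).reverse.prod.mulVec v =
          (L.map Prod.fst).reverse.prod.mulVec (p.1.mulVec v) := by
        rw [List.map_cons, List.reverse_cons, List.prod_append, List.prod_singleton,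
          ← Matrix.mulVec_mulVec]
      have e2 : ((p :: L).map Prod.snd).reverse.prod.mulVec w =
          (L.map Prod.snd).reverse.prod.mulVec (p.2.mulVec w) := by
        rw [List.map_cons, List.reverse_cons, List.prod_append, List.prod_singleton,
          ← Matrix.mulVec_mulVec]
      rw [e1, e2]
      refine ih hL' (p.1.mulVec v) (p.2.mulVec w) ?_ ?_ ?_
      · intro i
        simp only [Matrix.mulVec, dotProduct]
        exact Finset.sum_nonneg fun k _ => mul_nonneg (hp.1 i k) (hv k)
      · intro j
        simp only [Matrix.mulVec, dotProduct]
        exact Finset.sum_nonneg fun k _ => mul_nonneg (hp.2.1 j k) (hw k)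
      · intro j
        simp only [Matrix.mulVec, dotProduct]
        calc ∑ k : {x // x ∈ J}, p.2 j k * w k
            ≤ ∑ k : {x // x ∈ J}, p.1 j.val k.val * v k.val := by
              refine Finset.sum_le_sum fun k _ => ?_
              exact mul_le_mul (hp.2.2 j k) (hvw k) (hw k) (hp.1 j.val k.val)
          _ = ∑ k ∈ J, p.1 j.val k * v k :=
              Finset.sum_coe_sort J (fun k => p.1 j.val k * v k)
          _ ≤ ∑ k : Fin N, p.1 j.val k * v k := by
              refine Finset.sum_le_sum_of_subset_of_nonneg (Finset.subset_univ J) fun k _ _ => ?_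
              exact mul_nonneg (hp.1 j.val k) (hv k)

end Sub

/-- for Metzler matrices `F₀,…,F_K`, an index set `J`, a nonnegative
initial vector `P₀` and durations `τ₀,…,τ_K ≥ 0`, the full solution
`P(T) = exp(F_K τ_K) ⋯ exp(F₀ τ₀) P₀` dominates, entrywise on `J`, the reduced
solution `P̄_J(T) = exp([F_K]_J τ_K) ⋯ exp([F₀]_J τ₀) P₀|_J`. -/
theorem stmt12 {N K : ℕ} (F : Fin (K + 1) → Matrix (Fin N) (Fin N) ℝ)
    (hMetzler : ∀ k, ∀ i j, i ≠ j → 0 ≤ F k i j)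
    (J : Finset (Fin N)) (P0 : Fin N → ℝ) (hP0 : ∀ i, 0 ≤ P0 i)
    (τ : Fin (K + 1) → ℝ) (hτ : ∀ k, 0 ≤ τ k) :
    let PT : Fin N → ℝ :=
      ((List.ofFn fun k => exp (τ k • F k)).reverse.prod).mulVec P0
    let PbarT : {j // j ∈ J} → ℝ :=
      ((List.ofFn fun k =>
          exp (τ k • ((F k).submatrix Subtype.val Subtype.val :
            Matrix {j // j ∈ J} {j // j ∈ J} ℝ))).reverse.prod).mulVec
        (fun j => P0 j.val)
    ∀ j : {j // j ∈ J}, PbarT j ≤ PT j.val := by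
  intro PT PbarT j
  set L : List (Matrix (Fin N) (Fin N) ℝ × Matrix {x // x ∈ J} {x // x ∈ J} ℝ) :=
    List.ofFn fun k => (exp (τ k • F k),
      exp (τ k • ((F k).submatrix Subtype.val Subtype.val :
        Matrix {j // j ∈ J} {j // j ∈ J} ℝ))) with hLdef
  have hMet : ∀ k, ∀ i j, i ≠ j → 0 ≤ (τ k • F k) i j := by
    intro k i j hij
    simp only [Matrix.smul_apply, smul_eq_mul]
    exact mul_nonneg (hτ k) (hMetzler k i j hij)
  have hMetSub : ∀ k, ∀ i j : {x // x ∈ J}, i ≠ j →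
      0 ≤ (τ k • ((F k).submatrix Subtype.val Subtype.val :
        Matrix {x // x ∈ J} {x // x ∈ J} ℝ)) i j := by
    intro k i j hij
    simp only [Matrix.smul_apply, Matrix.submatrix_apply, smul_eq_mul]
    exact mul_nonneg (hτ k) (hMetzler k i.val j.val (fun h => hij (Subtype.ext h)))
  have hsubeq : ∀ k, (τ k • ((F k).submatrix Subtype.val Subtype.val :
      Matrix {x // x ∈ J} {x // x ∈ J} ℝ)) =
      ((τ k • F k).submatrix Subtype.val Subtype.val :
        Matrix {x // x ∈ J} {x // x ∈ J} ℝ) := by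
    intro k; ext i j; simp
  have hL : ∀ p ∈ L, (∀ i j, 0 ≤ p.1 i j) ∧ (∀ i j, 0 ≤ p.2 i j) ∧
      (∀ i j : {x // x ∈ J}, p.2 i j ≤ p.1 i.val j.val) := by
    intro p hp
    rw [hLdef, List.mem_ofFn] at hp
    obtain ⟨k, rfl⟩ := hp
    refine ⟨fun i j => exp_metzler_nonneg (hMet k) i j,
      fun i j => exp_metzler_nonneg (hMetSub k) i j, fun i j => ?_⟩
    show exp (τ k • ((F k).submatrix Subtype.val Subtype.val :
        Matrix {x // x ∈ J} {x // x ∈ J} ℝ)) i j ≤ exp (τ k • F k) i.val j.val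
    rw [hsubeq k]
    exact exp_submatrix_le (hMet k) i j
  have hkey := key_list L hL P0 (fun j => P0 j.val) hP0 (fun j => hP0 j.val)
    (fun j => le_rfl)
  have hmapfst : L.map Prod.fst = List.ofFn fun k => exp (τ k • F k) := by
    rw [hLdef, List.map_ofFn]; rfl
  have hmapsnd : L.map Prod.snd = List.ofFn fun k =>
      exp (τ k • ((F k).submatrix Subtype.val Subtype.val :
        Matrix {j // j ∈ J} {j // j ∈ J} ℝ)) := by
    rw [hLdef, List.map_ofFn]; rfl
  have := hkey.2.2 j
  rw [hmapfst, hmapsnd] at this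
  exact this
end
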